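/- There exists a constant C > 0 such that for every ε > 0 there exists δ > 0 with the following property: for every natural number d, every pair of vectors s = (s_1,…,s_d) and v = (v_1,…,v_d) in ℝ^d, and every real v₀ ∈ (0,δ) satisfying |v_j| < v₀ for all j = 1,…,d, one has | Σ_{j=1}^d φ(s_j + v_j) − Σ_{j=1}^d φ(s_j) | ≤ ε·Σ_{j=1}^d φ(s_j) + C·d·e^{−1/v₀}. -/

import Mathlib

open Real Set Finset

/-- The standard normal density `φ(x) = (2π)^{-1/2} e^{-x²/2}`. -/
noncomputable def phi (x : ℝ) : ℝ := Real.exp (-x ^ 2 / 2) / Real.sqrt (2 * Real.pi)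

lemma phi_pos (x : ℝ) : 0 < phi x := by
  unfold phi
  have := Real.pi_pos
  positivity

lemma phi_le (v₀ x : ℝ) (hv : 0 < v₀) (hx : 2 / v₀ ≤ x ^ 2) :
    phi x ≤ Real.exp (-1 / v₀) / Real.sqrt (2 * Real.pi) := by
  unfold phi
  have hs : 0 < Real.sqrt (2 * Real.pi) := Real.sqrt_pos.mpr (by positivity)
  rw [div_le_div_iff_of_pos_right hs, Real.exp_le_exp]
  have h2 : 2 / v₀ = 2 * (1 / v₀) := by ring
  rw [h2] at hx
  have : -1 / v₀ = -(1 / v₀) := by ring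
  rw [this]
  linarith

lemma key (ε v₀ x w : ℝ) (hε : 0 < ε) (hε1 : ε ≤ 1) (hv0 : 0 < v₀)
    (h8 : v₀ ≤ ε / 8) (h6 : Real.sqrt v₀ ≤ ε / 6) (hw : |w| ≤ v₀) :
    |phi (x + w) - phi x| ≤ ε * phi x + Real.exp (-1 / v₀) := by
  have hv1 : v₀ ≤ 1 := by linarith
  by_cases hx : |x| ≤ 1 + Real.sqrt (2 / v₀)
  · -- small case
    set t : ℝ := (x ^ 2 - (x + w) ^ 2) / 2 with ht
    have hid : phi (x + w) - phi x = phi x * (Real.exp t - 1) := by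
      unfold phi
      rw [ht]
      rw [mul_sub, mul_one, div_mul_eq_mul_div, ← Real.exp_add]
      ring_nf
    -- bound |t|
    have hsq : Real.sqrt (2 / v₀) * v₀ = Real.sqrt 2 * Real.sqrt v₀ := by
      rw [Real.sqrt_div (by norm_num : (0:ℝ) ≤ 2) v₀, div_mul_eq_mul_div, mul_div_assoc,
        Real.div_sqrt]
    have h2le : Real.sqrt 2 ≤ 1.5 := by
      nlinarith [Real.sq_sqrt (by norm_num : (0:ℝ) ≤ 2), Real.sqrt_nonneg 2]
    have habs : |t| ≤ v₀ + Real.sqrt 2 * Real.sqrt v₀ + v₀ ^ 2 / 2 := by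
      have : t = -(x * w) - w ^ 2 / 2 := by rw [ht]; ring
      rw [this]
      have h1 : |(-(x * w) - w ^ 2 / 2)| ≤ |x| * |w| + w ^ 2 / 2 := by
        calc |(-(x * w) - w ^ 2 / 2)| ≤ |(-(x * w))| + |w ^ 2 / 2| := abs_sub _ _
          _ = |x| * |w| + w ^ 2 / 2 := by
              rw [abs_neg, abs_mul, abs_of_nonneg (by positivity : (0:ℝ) ≤ w ^ 2 / 2)]
      have hxw : |x| * |w| ≤ (1 + Real.sqrt (2 / v₀)) * v₀ :=
        mul_le_mul hx hw (abs_nonneg w) (by positivity)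
      have hw2 : w ^ 2 ≤ v₀ ^ 2 := by
        rw [← sq_abs]
        exact pow_le_pow_left₀ (abs_nonneg w) hw 2
      nlinarith [hsq]
    have ht1 : |t| ≤ 1 := by
      nlinarith [Real.sqrt_nonneg v₀, mul_le_mul h2le h6 (Real.sqrt_nonneg v₀) (by norm_num : (0:ℝ) ≤ 1.5)]
    have ht2 : 2 * |t| ≤ ε := by
      nlinarith [Real.sqrt_nonneg v₀, mul_le_mul h2le h6 (Real.sqrt_nonneg v₀) (by norm_num : (0:ℝ) ≤ 1.5)]
    have hexp : |Real.exp t - 1| ≤ 2 * |t| := Real.abs_exp_sub_one_le ht1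
    rw [hid, abs_mul, abs_of_pos (phi_pos x)]
    have : phi x * |Real.exp t - 1| ≤ phi x * ε := by
      apply mul_le_mul_of_nonneg_left (hexp.trans ht2) (phi_pos x).le
    calc phi x * |Real.exp t - 1| ≤ phi x * ε := this
      _ = ε * phi x := by ring
      _ ≤ ε * phi x + Real.exp (-1 / v₀) := le_add_of_nonneg_right (Real.exp_pos _).le
  · -- large case
    push_neg at hx
    have hsnn := Real.sqrt_nonneg (2 / v₀)
    have hsq : Real.sqrt (2 / v₀) ^ 2 = 2 / v₀ := Real.sq_sqrt (by positivity)
    have hx2 : 2 / v₀ ≤ x ^ 2 := by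
      have := sq_abs x
      nlinarith
    have hxw2 : 2 / v₀ ≤ (x + w) ^ 2 := by
      have h1 : Real.sqrt (2 / v₀) ≤ |x + w| := by
        have := abs_sub_abs_le_abs_sub (x + w) w
        have h2 : |x + w + -w| = |x| := by ring_nf
        have h3 : |x| - |w| ≤ |x + w| := by
          have := abs_sub_abs_le_abs_sub x (-w)
          simp only [abs_neg, sub_neg_eq_add] at this
          linarith
        linarith
      nlinarith [abs_nonneg (x + w), sq_abs (x + w)]
    have hb1 := phi_le v₀ x hv0 hx2
    have hb2 := phi_le v₀ (x + w) hv0 hxw2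
    have hπ : 2 ≤ Real.sqrt (2 * Real.pi) := by
      have h4 : (4:ℝ) ≤ 2 * Real.pi := by nlinarith [Real.pi_gt_three]
      nlinarith [Real.sq_sqrt (by positivity : (0:ℝ) ≤ 2 * Real.pi),
        Real.sqrt_nonneg (2 * Real.pi)]
    have hsp : (0:ℝ) < Real.sqrt (2 * Real.pi) := by linarith
    have hE : 0 < Real.exp (-1 / v₀) := Real.exp_pos _
    calc |phi (x + w) - phi x| ≤ phi (x + w) + phi x := by
          have := (phi_pos (x+w)).le
          have := (phi_pos x).le
          rw [abs_sub_le_iff]; constructor <;> linarith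
      _ ≤ 2 * (Real.exp (-1 / v₀) / Real.sqrt (2 * Real.pi)) := by linarith
      _ ≤ Real.exp (-1 / v₀) := by
          have heq : 2 * (Real.exp (-1 / v₀) / Real.sqrt (2 * Real.pi))
              = 2 * Real.exp (-1 / v₀) / Real.sqrt (2 * Real.pi) := by ring
          rw [heq, div_le_iff₀ hsp]
          nlinarith
      _ ≤ ε * phi x + Real.exp (-1 / v₀) :=
          le_add_of_nonneg_left (mul_nonneg hε.le (phi_pos x).le)

theorem stmt3 :
    ∃ C : ℝ, 0 < C ∧ ∀ ε : ℝ, 0 < ε → ∃ δ : ℝ, 0 < δ ∧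
      ∀ (d : ℕ) (s v : Fin d → ℝ) (v₀ : ℝ), 0 < v₀ → v₀ < δ →
        (∀ j, |v j| < v₀) →
        |(∑ j, phi (s j + v j)) - ∑ j, phi (s j)| ≤
          ε * (∑ j, phi (s j)) + C * d * Real.exp (-1 / v₀) := by
  refine ⟨1, one_pos, fun ε hε => ?_⟩
  set ε' : ℝ := min ε 1 with hε'def
  have hε'pos : 0 < ε' := lt_min hε one_pos
  have hε'le : ε' ≤ ε := min_le_left _ _
  have hε'1 : ε' ≤ 1 := min_le_right _ _
  refine ⟨min (ε' / 8) ((ε' / 6) ^ 2), by positivity, ?_⟩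
  intro d s v v₀ hv0 hvδ hv
  have h8 : v₀ ≤ ε' / 8 := (hvδ.trans_le (min_le_left _ _)).le
  have h6 : Real.sqrt v₀ ≤ ε' / 6 := by
    have h1 : v₀ ≤ (ε' / 6) ^ 2 := (hvδ.trans_le (min_le_right _ _)).le
    calc Real.sqrt v₀ ≤ Real.sqrt ((ε' / 6) ^ 2) := Real.sqrt_le_sqrt h1
      _ = ε' / 6 := Real.sqrt_sq (by positivity)
  have hterm : ∀ j : Fin d, |phi (s j + v j) - phi (s j)| ≤
      ε' * phi (s j) + Real.exp (-1 / v₀) := fun j =>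
    key ε' v₀ (s j) (v j) hε'pos hε'1 hv0 h8 h6 (hv j).le
  have hsum : (∑ j, phi (s j + v j)) - ∑ j, phi (s j)
      = ∑ j, (phi (s j + v j) - phi (s j)) := (Finset.sum_sub_distrib _ _).symm
  rw [hsum]
  calc |∑ j, (phi (s j + v j) - phi (s j))|
      ≤ ∑ j, |phi (s j + v j) - phi (s j)| := Finset.abs_sum_le_sum_abs _ _
    _ ≤ ∑ j : Fin d, (ε' * phi (s j) + Real.exp (-1 / v₀)) :=
        Finset.sum_le_sum fun j _ => hterm j
    _ = ε' * (∑ j, phi (s j)) + d * Real.exp (-1 / v₀) := by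
        rw [Finset.sum_add_distrib, ← Finset.mul_sum, Finset.sum_const, Finset.card_univ,
          Fintype.card_fin, nsmul_eq_mul]
    _ ≤ ε * (∑ j, phi (s j)) + 1 * d * Real.exp (-1 / v₀) := by
        have hnn : 0 ≤ ∑ j, phi (s j) := Finset.sum_nonneg fun j _ => (phi_pos (s j)).le
        have := mul_le_mul_of_nonneg_right hε'le hnn
        rw [one_mul]
        linarith
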